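/- Let X and Y be vector spaces over a field and let A, B : X → Y be linear maps such that for every x ∈ X the set {Ax, Bx} is linearly dependent. Then either both A and B have rank at most one, or A and B are linearly dependent (i.e., one is a scalar multiple of the other). -/
import Mathlib

open LinearMap

/-- Pointwise dependence: if `A x ≠ 0` then `B x` is a multiple of `A x`. -/
private lemma ptwise {K X Y : Type*} [Field K] [AddCommGroup X] [Module K X]
    [AddCommGroup Y] [Module K Y] (A B : X →ₗ[K] Y)
    (h : ∀ x : X, ¬ LinearIndependent K ![A x, B x]) {x : X} (hx : A x ≠ 0) :
    ∃ c : K, B x = c • A x := by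
  have := (LinearIndependent.pair_iff' hx).not.mp (h x)
  push_neg at this
  obtain ⟨a, ha⟩ := this
  exact ⟨a, ha.symm⟩

/-- Two points with independent images get the same scalar. -/
private lemma samec {K X Y : Type*} [Field K] [AddCommGroup X] [Module K X]
    [AddCommGroup Y] [Module K Y] (A B : X →ₗ[K] Y)
    (h : ∀ x : X, ¬ LinearIndependent K ![A x, B x]) {u w : X} {s t : K}
    (hind : LinearIndependent K ![A u, A w])
    (hu : B u = s • A u) (hw : B w = t • A w) : s = t := by
  have hne : A u + A w ≠ 0 := by
    intro h0
    have := (LinearIndependent.pair_iff.mp hind 1 1 (by simpa using h0)).1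
    simp at this
  have hAuw : A (u + w) ≠ 0 := by simpa using hne
  obtain ⟨e, he⟩ := ptwise A B h hAuw
  have heq : (s - e) • A u + (t - e) • A w = 0 := by
    have h1 : B u + B w = e • (A u + A w) := by simpa using he
    rw [hu, hw] at h1
    rw [sub_smul, sub_smul, smul_add] at *
    abel_nf
    abel_nf at h1
    linear_combination (norm := abel) h1
  have := LinearIndependent.pair_iff.mp hind _ _ heq
  rw [sub_eq_zero.mp this.1, sub_eq_zero.mp this.2]

/-- If the range of `A` has rank `> 1`, then `B` is a multiple of `A`. -/
private lemma key {K X Y : Type*} [Field K] [AddCommGroup X] [Module K X]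
    [AddCommGroup Y] [Module K Y] (A B : X →ₗ[K] Y)
    (h : ∀ x : X, ¬ LinearIndependent K ![A x, B x])
    (hA : ¬ Module.rank K (LinearMap.range A) ≤ 1) :
    ∃ c : K, B = c • A := by
  -- get two points with linearly independent images
  rw [rank_le_one_iff] at hA
  push_neg at hA
  obtain ⟨⟨v, x₁, hx₁⟩, hv⟩ := hA ⟨0, 0, map_zero A⟩
  have hv0 : v ≠ 0 := by
    intro h0
    exact hv 0 (Subtype.ext (by simp [h0]))
  obtain ⟨⟨w, x₂, hx₂⟩, hw⟩ := hA ⟨v, x₁, hx₁⟩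
  have hind : LinearIndependent K ![A x₁, A x₂] := by
    rw [hx₁, hx₂]
    rw [LinearIndependent.pair_iff' hv0]
    intro a ha
    exact hw a (by simp [Subtype.ext_iff, ha])
  have hA1 : A x₁ ≠ 0 := by rw [hx₁]; exact hv0
  have hA2 : A x₂ ≠ 0 := by
    intro h0
    have := (LinearIndependent.pair_iff.mp hind 0 1 (by simp [h0])).2
    simp at this
  -- kernel of A is contained in kernel of B
  have hker : ∀ x : X, A x = 0 → B x = 0 := by
    intro x hx
    by_contra hBx
    have step : ∀ i : X, A i ≠ 0 → ∃ d : K, B x = d • A i := by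
      intro i hi
      have hAxi : A (x + i) ≠ 0 := by simpa [map_add, hx] using hi
      obtain ⟨c', hc'⟩ := ptwise A B h hAxi
      obtain ⟨c, hc⟩ := ptwise A B h hi
      refine ⟨c' - c, ?_⟩
      have : B x + B i = c' • (A x + A i) := by simpa using hc'
      rw [hc, hx] at this
      simp only [zero_add] at this
      rw [sub_smul, eq_sub_iff_add_eq]
      exact this
    obtain ⟨d₁, hd₁⟩ := step x₁ hA1
    obtain ⟨d₂, hd₂⟩ := step x₂ hA2
    have heq : d₁ • A x₁ + (-d₂) • A x₂ = 0 := by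
      rw [neg_smul, ← hd₁, ← hd₂]; abel
    have := (LinearIndependent.pair_iff.mp hind _ _ heq).1
    rw [this, zero_smul] at hd₁
    exact hBx hd₁
  -- the common scalar
  obtain ⟨c, hc⟩ := ptwise A B h hA1
  obtain ⟨c₂, hc₂⟩ := ptwise A B h hA2
  have hcc₂ : c = c₂ := samec A B h hind hc hc₂
  refine ⟨c, ?_⟩
  ext x
  simp only [LinearMap.smul_apply]
  by_cases hAx : A x = 0
  · rw [hker x hAx, hAx, smul_zero]
  obtain ⟨d, hd⟩ := ptwise A B h hAx
  by_cases hind1 : LinearIndependent K ![A x₁, A x]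
  · rw [hd, samec A B h hind1 hc hd]
  · -- A x is a multiple of A x₁; then A x₂, A x are independent
    rw [LinearIndependent.pair_iff' hA1] at hind1
    push_neg at hind1
    obtain ⟨a, ha⟩ := hind1
    have ha0 : a ≠ 0 := by
      intro h0
      rw [h0, zero_smul] at ha
      exact hAx ha.symm
    have hind2 : LinearIndependent K ![A x₂, A x] := by
      rw [LinearIndependent.pair_iff' hA2]
      intro b hb
      rw [← ha] at hb
      have heq : a • A x₁ + (-b) • A x₂ = 0 := by
        rw [neg_smul, ← hb]; abel
      exact ha0 (LinearIndependent.pair_iff.mp hind _ _ heq).1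
    rw [hd, hcc₂, samec A B h hind2 hc₂ hd]

theorem stmt2 {K X Y : Type*} [Field K] [AddCommGroup X] [Module K X]
    [AddCommGroup Y] [Module K Y] (A B : X →ₗ[K] Y)
    (h : ∀ x : X, ¬ LinearIndependent K ![A x, B x]) :
    (Module.rank K (LinearMap.range A) ≤ 1 ∧ Module.rank K (LinearMap.range B) ≤ 1) ∨
      ¬ LinearIndependent K ![A, B] := by
  by_cases hA : Module.rank K (LinearMap.range A) ≤ 1
  · by_cases hB : Module.rank K (LinearMap.range B) ≤ 1
    · exact Or.inl ⟨hA, hB⟩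
    · -- rank B > 1 : A = c • B
      have h' : ∀ x : X, ¬ LinearIndependent K ![B x, A x] := by
        intro x hx
        apply h x
        rw [LinearIndependent.pair_iff] at *
        intro s t hst
        have := hx t s (by rw [← hst]; abel)
        exact ⟨this.2, this.1⟩
      obtain ⟨c, hc⟩ := key B A h' hB
      refine Or.inr ?_
      rw [LinearIndependent.pair_iff]
      push_neg
      refine ⟨1, -c, ?_, ?_⟩
      · rw [hc]; simp
      · intro h1; simp at h1
  · obtain ⟨c, hc⟩ := key A B h hA
    refine Or.inr ?_
    rw [LinearIndependent.pair_iff]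
    push_neg
    refine ⟨-c, 1, ?_, ?_⟩
    · rw [hc]; simp
    · intro _
      exact one_ne_zero
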